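/- If C ⊆ X^n is a diameter perfect distance-4 code, then the partition {C_1, C_2} of {0,1}^n, where C_1 = { x ∈ {0,1}^n : d_H(x,C) = 1 } and C_2 is its complement, is an equitable partition (perfect coloring) of the hypercube graph with quotient matrix ((1, n−1), (n/2, n/2)): every vertex of C_1 has exactly 1 neighbor in C_1 and n−1 in C_2, and every vertex of C_2 has exactly n/2 neighbors in each part. -/

import Mathlib

/-- Binary words of length `n`. -/
abbrev BW (n : ℕ) := Fin n → ZMod 2

/-- Ternary words of length `n` over `{0,1,*}`, with `none` playing the role of `*`. -/
abbrev TW (n : ℕ) := Fin n → Option (ZMod 2)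

/-- Membership in `X^n`: exactly one coordinate equals `*`. -/
def isX {n : ℕ} (w : TW n) : Prop := (Finset.univ.filter (fun i => w i = none)).card = 1

/-- Embedding of binary words into ternary words. -/
def emb {n : ℕ} (x : BW n) : TW n := fun i => some (x i)

namespace S17
open Finset
variable {n : ℕ}

lemma hdist_def (x y : TW n) : hammingDist x y = #{i | x i ≠ y i} := rfl

lemma dist_le_of_subset (x y : TW n) (s : Finset (Fin n))
    (h : ∀ i, i ∉ s → x i = y i) : hammingDist x y ≤ s.card := by
  rw [hdist_def]
  apply card_le_card
  intro j hj
  simp only [mem_filter] at hj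
  by_contra hjs
  exact hj.2 (h j hjs)

/-- characterization of covering -/
lemma cover_iff (c : TW n) (p : Fin n) (hp : ({i | c i = none} : Finset (Fin n)) = {p})
    (x : BW n) : hammingDist (emb x) c = 1 ↔ ∀ i, i ≠ p → c i = some (x i) := by
  have hcp : c p = none := by
    have : p ∈ ({i | c i = none} : Finset (Fin n)) := by rw [hp]; exact mem_singleton_self p
    simpa using this
  have hpm : p ∈ ({i | emb x i ≠ c i} : Finset (Fin n)) := by
    rw [Finset.mem_filter]; simp [emb, hcp]
  rw [hdist_def]
  constructor
  · intro h1 i hip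
    obtain ⟨a, ha⟩ := card_eq_one.mp h1
    have hap : a = p := by
      have := hpm; rw [ha] at this
      exact (show p = a by simpa using this).symm
    have : i ∉ ({j | emb x j ≠ c j} : Finset (Fin n)) := by
      rw [ha, hap]; simpa using hip
    simp only [mem_filter, mem_univ, true_and, not_not] at this
    exact this.symm
  · intro h
    have : ({i | emb x i ≠ c i} : Finset (Fin n)) = {p} := by
      apply Finset.eq_singleton_iff_unique_mem.mpr
      refine ⟨hpm, ?_⟩
      intro j hj
      by_contra hjp
      simp only [mem_filter, mem_univ, true_and] at hj
      exact hj (h j hjp).symm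
    rw [this, card_singleton]

lemma isX_pos {c : TW n} (hc : isX c) :
    ∃ p, ({i | c i = none} : Finset (Fin n)) = {p} := card_eq_one.mp hc

/-- difference set bound -/
lemma diff_subset (c c' : TW n) (p p' : Fin n) (x y : BW n)
    (hc : ∀ i, i ≠ p → c i = some (x i)) (hc' : ∀ i, i ≠ p' → c' i = some (y i))
    (s : Finset (Fin n)) (hxy : ∀ i, i ∉ s → x i = y i) :
    hammingDist c c' ≤ (insert p (insert p' s)).card := by
  apply dist_le_of_subset
  intro i hi
  simp only [mem_insert] at hi
  push_neg at hi
  rw [hc i hi.1, hc' i hi.2.1, hxy i hi.2.2]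

lemma bdist_def (x y : BW n) : hammingDist x y = #{i | x i ≠ y i} := rfl

lemma zmod2_succ (a b : ZMod 2) (h : a ≠ b) : a = b + 1 := by revert h; revert a b; decide

lemma zmod2_self (a : ZMod 2) : a ≠ a + 1 := by revert a; decide

def nb (x : BW n) (i : Fin n) : BW n := Function.update x i (x i + 1)

lemma nb_apply (x : BW n) (i j : Fin n) : nb x i j = if j = i then x i + 1 else x j := by
  simp [nb, Function.update]

lemma nb_diff (x : BW n) (i : Fin n) : ({j | x j ≠ nb x i j} : Finset (Fin n)) = {i} := by
  ext j
  by_cases hj : j = i <;> simp [nb_apply, hj, zmod2_self]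

lemma nb_dist (x : BW n) (i : Fin n) : hammingDist x (nb x i) = 1 := by
  rw [bdist_def, nb_diff, card_singleton]

lemma dist_one_iff (x y : BW n) : hammingDist x y = 1 ↔ ∃ i, y = nb x i := by
  constructor
  · intro h
    rw [bdist_def] at h
    obtain ⟨i, hi⟩ := card_eq_one.mp h
    refine ⟨i, funext fun j => ?_⟩
    by_cases hj : j = i
    · subst hj
      have : j ∈ ({k | x k ≠ y k} : Finset (Fin n)) := by rw [hi]; simp
      simp only [mem_filter, mem_univ, true_and] at this
      rw [nb_apply, if_pos rfl]
      exact zmod2_succ _ _ (Ne.symm this)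
    · have : j ∉ ({k | x k ≠ y k} : Finset (Fin n)) := by rw [hi]; simpa using hj
      simp only [mem_filter, mem_univ, true_and, not_not] at this
      rw [nb_apply, if_neg hj, this]
  · rintro ⟨i, rfl⟩; exact nb_dist x i

lemma nb_inj (x : BW n) : Function.Injective (nb x) := by
  intro i i' h
  by_contra hne
  have := congrFun h i
  rw [nb_apply, nb_apply, if_pos rfl, if_neg hne] at this
  exact zmod2_self (x i) this.symm

lemma card_sphere (x : BW n) : ({y | hammingDist x y = 1} : Finset (BW n)).card = n := by
  have he : ({y | hammingDist x y = 1} : Finset (BW n)) = Finset.univ.image (nb x) := by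
    ext y
    simp only [mem_filter, mem_univ, true_and, mem_image]
    rw [dist_one_iff]
    constructor
    · rintro ⟨i, rfl⟩; exact ⟨i, rfl⟩
    · rintro ⟨i, rfl⟩; exact ⟨i, rfl⟩
  rw [he, card_image_of_injective _ (nb_inj x), card_univ, Fintype.card_fin]

lemma card_BW : Fintype.card (BW n) = 2 ^ n := by
  simp [BW]

def fill (c : TW n) (p : Fin n) (a : ZMod 2) : BW n :=
  fun i => if i = p then a else (c i).getD 0

lemma hp_some {c : TW n} {p : Fin n} (hp : ({i | c i = none} : Finset (Fin n)) = {p})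
    {i : Fin n} (h : i ≠ p) : c i = some ((c i).getD 0) := by
  have : i ∉ ({j | c j = none} : Finset (Fin n)) := by rw [hp]; simpa using h
  simp only [mem_filter, mem_univ, true_and] at this
  cases hci : c i with
  | none => exact absurd hci this
  | some b => simp

lemma fill_covered {c : TW n} {p : Fin n} (hp : ({i | c i = none} : Finset (Fin n)) = {p})
    (a : ZMod 2) : hammingDist (emb (fill c p a)) c = 1 := by
  rw [cover_iff c p hp]
  intro i hip
  rw [hp_some hp hip]
  simp [fill, if_neg hip]

lemma covered_eq_fill {c : TW n} {p : Fin n} (hp : ({i | c i = none} : Finset (Fin n)) = {p})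
    {x : BW n} (hx : hammingDist (emb x) c = 1) : x = fill c p (x p) := by
  rw [cover_iff c p hp] at hx
  funext i
  by_cases hip : i = p
  · subst hip; simp [fill]
  · simp only [fill, if_neg hip]
    rw [hx i hip]; rfl

lemma card_cov {c : TW n} {p : Fin n} (hp : ({i | c i = none} : Finset (Fin n)) = {p}) :
    ({x | hammingDist (emb x) c = 1} : Finset (BW n)).card = 2 := by
  have he : ({x | hammingDist (emb x) c = 1} : Finset (BW n))
      = Finset.univ.image (fill c p) := by
    ext x
    simp only [mem_filter, mem_univ, true_and, mem_image]
    constructor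
    · intro hx; exact ⟨x p, (covered_eq_fill hp hx).symm⟩
    · rintro ⟨a, rfl⟩; exact fill_covered hp a
  rw [he, card_image_of_injective, card_univ]
  · rfl
  · intro a b hab
    have := congrFun hab p
    simpa [fill] using this

end S17

open Finset S17 in
theorem stmt17 {n : ℕ} (C : Finset (TW n)) (hX : ∀ c ∈ C, isX c)
    (hC2 : 2 ≤ C.card)
    (hd : ∀ c ∈ C, ∀ c' ∈ C, c ≠ c' → 4 ≤ hammingDist c c')
    (hcard : C.card * (3 * n - 2) = n * 2 ^ (n - 1)) :
    let C1 : Set (BW n) := {x | ∃ c ∈ C, hammingDist (emb x) c = 1}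
    let C2 : Set (BW n) := C1ᶜ
    (∀ x ∈ C1,
      Set.ncard {y : BW n | hammingDist x y = 1 ∧ y ∈ C1} = 1 ∧
      Set.ncard {y : BW n | hammingDist x y = 1 ∧ y ∈ C2} = n - 1) ∧
    (∀ x ∈ C2,
      2 * Set.ncard {y : BW n | hammingDist x y = 1 ∧ y ∈ C1} = n ∧
      2 * Set.ncard {y : BW n | hammingDist x y = 1 ∧ y ∈ C2} = n) := by
  classical
  intro C1 C2
  -- basic facts
  obtain ⟨c₀, hc₀⟩ : ∃ c, c ∈ C := Finset.card_pos.mp (by omega) |>.exists_mem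
  obtain ⟨p₀, hp₀⟩ := isX_pos (hX c₀ hc₀)
  have hn : 0 < n := Fin.pos_iff_nonempty.mpr ⟨p₀⟩
  set D1 : Finset (BW n) := {x | ∃ c ∈ C, hammingDist (emb x) c = 1} with hD1def
  set D2 : Finset (BW n) := D1ᶜ with hD2def
  set A : BW n → Finset (BW n) :=
    fun x => ({y | hammingDist x y = 1} : Finset (BW n)).filter (· ∈ D1) with hAdef
  set B : BW n → Finset (BW n) :=
    fun x => ({y | hammingDist x y = 1} : Finset (BW n)).filter (· ∉ D1) with hBdef
  have memC1 : ∀ x : BW n, x ∈ C1 ↔ ∃ c ∈ C, hammingDist (emb x) c = 1 := fun x => Iff.rfl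
  have memD1 : ∀ x : BW n, x ∈ D1 ↔ ∃ c ∈ C, hammingDist (emb x) c = 1 := by
    intro x; rw [hD1def]; simp
  -- ncard bridges
  have hnc1 : ∀ x : BW n,
      {y : BW n | hammingDist x y = 1 ∧ y ∈ C1}.ncard = (A x).card := by
    intro x
    rw [show {y : BW n | hammingDist x y = 1 ∧ y ∈ C1} = ↑(A x) by
      ext z
      simp only [Set.mem_setOf_eq, Finset.coe_filter, hAdef, Finset.mem_filter,
        Finset.mem_univ, true_and, memC1, memD1]]
    exact Set.ncard_coe_finset _
  have hnc2 : ∀ x : BW n,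
      {y : BW n | hammingDist x y = 1 ∧ y ∈ C2}.ncard = (B x).card := by
    intro x
    rw [show {y : BW n | hammingDist x y = 1 ∧ y ∈ C2} = ↑(B x) by
      ext z
      simp only [Set.mem_setOf_eq, Finset.coe_filter, hBdef, Finset.mem_filter,
        Finset.mem_univ, true_and, memD1]
      exact and_congr_right fun _ => Iff.rfl]
    exact Set.ncard_coe_finset _
  have hAB : ∀ x : BW n, (A x).card + (B x).card = n := by
    intro x
    have h := Finset.card_filter_add_card_filter_not
      (s := ({y | hammingDist x y = 1} : Finset (BW n))) (p := (· ∈ D1))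
    rw [card_sphere x] at h
    simpa [hAdef, hBdef] using h
  -- unique coverer
  have huniq : ∀ (x : BW n), ∀ c ∈ C, ∀ c' ∈ C,
      hammingDist (emb x) c = 1 → hammingDist (emb x) c' = 1 → c = c' := by
    intro x c hc c' hc' h h'
    by_contra hne
    obtain ⟨p, hp⟩ := isX_pos (hX c hc)
    obtain ⟨p', hp'⟩ := isX_pos (hX c' hc')
    have h4 := hd c hc c' hc' hne
    have hle := diff_subset c c' p p' x x ((cover_iff c p hp x).mp h)
      ((cover_iff c' p' hp' x).mp h') ∅ (fun i _ => rfl)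
    have k1 := Finset.card_insert_le p (insert p' (∅ : Finset (Fin n)))
    have k2 := Finset.card_insert_le p' (∅ : Finset (Fin n))
    simp only [Finset.card_empty] at k2
    omega
  -- part 1 : each x ∈ D1 has exactly one neighbor in D1
  have part1 : ∀ x ∈ D1, (A x).card = 1 := by
    intro x hx
    obtain ⟨c, hcC, hcov⟩ := (memD1 x).mp hx
    obtain ⟨p, hp⟩ := isX_pos (hX c hcC)
    have hcx := (cover_iff c p hp x).mp hcov
    have hnbD1 : nb x p ∈ D1 := by
      refine (memD1 _).mpr ⟨c, hcC, ?_⟩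
      rw [cover_iff c p hp]
      intro i hip
      rw [nb_apply, if_neg hip]
      exact hcx i hip
    have hone : A x = {nb x p} := by
      apply Finset.eq_singleton_iff_unique_mem.mpr
      constructor
      · rw [hAdef]
        exact Finset.mem_filter.mpr
          ⟨Finset.mem_filter.mpr ⟨Finset.mem_univ _, nb_dist x p⟩, hnbD1⟩
      · intro y hy
        rw [hAdef] at hy
        obtain ⟨hy1, hy2⟩ := Finset.mem_filter.mp hy
        have hy1' : hammingDist x y = 1 := (Finset.mem_filter.mp hy1).2
        obtain ⟨i, rfl⟩ := (dist_one_iff x y).mp hy1'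
        obtain ⟨c', hc'C, hcov'⟩ := (memD1 _).mp hy2
        obtain ⟨p', hp'⟩ := isX_pos (hX c' hc'C)
        have hcy := (cover_iff c' p' hp' _).mp hcov'
        have hcc : c' = c := by
          by_contra hne
          have h4 := hd c' hc'C c hcC hne
          have hle := diff_subset c' c p' p (nb x i) x hcy hcx {i}
            (fun j hj => by rw [nb_apply, if_neg (by simpa using hj)])
          have k1 := Finset.card_insert_le p' (insert p ({i} : Finset (Fin n)))
          have k2 := Finset.card_insert_le p ({i} : Finset (Fin n))
          simp only [Finset.card_singleton] at k2
          omega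
        subst hcc
        have hpp : p' = p := Finset.singleton_injective (hp' ▸ hp ▸ rfl)
        subst hpp
        have hip : i = p' := by
          by_contra hip
          have e1 := hcy i hip
          have e2 := hcx i hip
          rw [nb_apply, if_pos rfl] at e1
          have := Option.some.inj (e2.symm.trans e1)
          exact zmod2_self (x i) this
        rw [hip]
    rw [hone, Finset.card_singleton]
  have part1B : ∀ x ∈ D1, (B x).card = n - 1 := by
    intro x hx
    have := hAB x
    have := part1 x hx
    omega
  -- cardinality of D1
  have hD1card : D1.card = 2 * C.card := by
    have hb : D1 = C.biUnion (fun c => ({x | hammingDist (emb x) c = 1} : Finset (BW n))) := by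
      ext x
      simp [memD1 x, Finset.mem_biUnion]
    rw [hb, Finset.card_biUnion]
    · rw [Finset.sum_congr rfl (fun c hc => by
        obtain ⟨p, hp⟩ := isX_pos (hX c hc)
        exact card_cov hp), Finset.sum_const, smul_eq_mul, mul_comm]
    · intro c hc c' hc' hne
      rw [Function.onFun, Finset.disjoint_left]
      intro x hxc hxc'
      simp only [Finset.mem_filter, Finset.mem_univ, true_and] at hxc hxc'
      exact hne (huniq x c hc c' hc' hxc hxc')
  -- double counting
  have hsym : ∑ x ∈ D1, (B x).card = ∑ y ∈ D2, (A y).card := by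
    have h1 : ∀ x : BW n, (B x).card
        = ∑ y ∈ D2, if hammingDist x y = 1 then 1 else 0 := by
      intro x
      rw [Finset.sum_boole]
      congr 1
      ext z
      simp only [hBdef, hD2def, Finset.mem_filter, Finset.mem_univ, true_and,
        Finset.mem_compl]
      tauto
    have h2 : ∀ y : BW n, (A y).card
        = ∑ x ∈ D1, if hammingDist x y = 1 then 1 else 0 := by
      intro y
      rw [Finset.sum_boole]
      congr 1
      ext z
      simp only [hAdef, Finset.mem_filter, Finset.mem_univ, true_and]
      rw [hammingDist_comm]
      tauto
    calc ∑ x ∈ D1, (B x).card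
        = ∑ x ∈ D1, ∑ y ∈ D2, if hammingDist x y = 1 then 1 else 0 :=
          Finset.sum_congr rfl fun x _ => h1 x
      _ = ∑ y ∈ D2, ∑ x ∈ D1, if hammingDist x y = 1 then 1 else 0 := Finset.sum_comm
      _ = ∑ y ∈ D2, (A y).card := Finset.sum_congr rfl fun y _ => (h2 y).symm
  -- upper bound for C2 vertices
  have hub : ∀ y : BW n, y ∉ D1 → 2 * (A y).card ≤ n := by
    intro y hyD
    haveI : Inhabited (Fin n) := ⟨⟨0, hn⟩⟩
    set S : Finset (Fin n) := {i | nb y i ∈ D1} with hSdef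
    have hAS : (A y).card = S.card := by
      have he : A y = S.image (nb y) := by
        ext z
        simp only [hAdef, hSdef, Finset.mem_filter, Finset.mem_univ, true_and,
          Finset.mem_image]
        constructor
        · rintro ⟨hz1, hz2⟩
          obtain ⟨i, rfl⟩ := (dist_one_iff y z).mp hz1
          exact ⟨i, hz2, rfl⟩
        · rintro ⟨i, hi, rfl⟩
          exact ⟨nb_dist y i, hi⟩
      rw [he, Finset.card_image_of_injective _ (nb_inj y)]
    have hex : ∀ i : Fin n, i ∈ S → ∃ (c : TW n) (p : Fin n), c ∈ C ∧
        ({k | c k = none} : Finset (Fin n)) = {p} ∧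
        hammingDist (emb (nb y i)) c = 1 := by
      intro i hi
      rw [hSdef] at hi
      simp only [Finset.mem_filter, Finset.mem_univ, true_and] at hi
      obtain ⟨c, hcC, hcov⟩ := (memD1 _).mp hi
      obtain ⟨p, hp⟩ := isX_pos (hX c hcC)
      exact ⟨c, p, hcC, hp, hcov⟩
    choose! cf pf h1 h2 h3 using hex
    -- equal coverers force equal directions
    have hcf_inj : ∀ i ∈ S, ∀ j ∈ S, cf i = cf j → i = j := by
      intro i hi j hj hcc
      by_contra hij
      have hpp : pf i = pf j :=
        Finset.singleton_injective (by rw [← h2 i hi, ← h2 j hj, hcc])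
      have hci := (cover_iff _ _ (h2 i hi) _).mp (h3 i hi)
      have hcj := (cover_iff _ _ (h2 j hj) _).mp (h3 j hj)
      have hipi : i = pf i := by
        by_contra hne
        have e1 := hci i hne
        have e2 := hcj i (by rw [← hpp]; exact hne)
        rw [hcc] at e1
        have he := Option.some.inj (e1.symm.trans e2)
        rw [nb_apply, nb_apply, if_pos rfl, if_neg hij] at he
        exact zmod2_self (y i) he.symm
      have hjpj : j = pf j := by
        by_contra hne
        have e1 := hcj j hne
        have e2 := hci j (by rw [hpp]; exact hne)
        rw [hcc] at e2
        have he := Option.some.inj (e2.symm.trans e1)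
        rw [nb_apply, nb_apply, if_pos rfl, if_neg (Ne.symm hij)] at he
        exact zmod2_self (y j) he
      exact hij (hipi.trans (hpp.trans hjpj.symm))
    have hsep : ∀ i ∈ S, ∀ j ∈ S, i ≠ j →
        4 ≤ (insert (pf i) (insert (pf j) ({i, j} : Finset (Fin n)))).card := by
      intro i hi j hj hij
      have hne : cf i ≠ cf j := fun h => hij (hcf_inj i hi j hj h)
      have h4 := hd (cf i) (h1 i hi) (cf j) (h1 j hj) hne
      have hle := diff_subset (cf i) (cf j) (pf i) (pf j) (nb y i) (nb y j)
        ((cover_iff _ _ (h2 i hi) _).mp (h3 i hi))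
        ((cover_iff _ _ (h2 j hj) _).mp (h3 j hj)) {i, j}
        (fun k hk => by
          simp only [Finset.mem_insert, Finset.mem_singleton] at hk
          push_neg at hk
          rw [nb_apply, nb_apply, if_neg hk.1, if_neg hk.2])
      omega
    have hcard_ij : ∀ i j : Fin n, ({i, j} : Finset (Fin n)).card ≤ 2 := by
      intro i j
      have := Finset.card_insert_le i ({j} : Finset (Fin n))
      simp only [Finset.card_singleton] at this
      omega
    have hpinj : ∀ i ∈ S, ∀ j ∈ S, pf i = pf j → i = j := by
      intro i hi j hj hpp
      by_contra hij
      have hs := hsep i hi j hj hij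
      rw [hpp, Finset.insert_idem] at hs
      have k1 := Finset.card_insert_le (pf j) ({i, j} : Finset (Fin n))
      have k2 := hcard_ij i j
      omega
    have hpS : ∀ i ∈ S, pf i ∉ S := by
      intro i hi hpiS
      by_cases hii : pf i = i
      · have hci := (cover_iff _ _ (h2 i hi) _).mp (h3 i hi)
        have hycov : hammingDist (emb y) (cf i) = 1 := by
          rw [cover_iff _ _ (h2 i hi)]
          intro k hk
          rw [hci k hk, nb_apply, if_neg (by rw [← hii]; exact hk)]
        exact hyD ((memD1 y).mpr ⟨cf i, h1 i hi, hycov⟩)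
      · have hs := hsep i hi (pf i) hpiS (fun h => hii h.symm)
        have hcol : insert (pf i) (insert (pf (pf i)) ({i, pf i} : Finset (Fin n)))
            = insert (pf (pf i)) ({i, pf i} : Finset (Fin n)) :=
          Finset.insert_eq_self.mpr (by simp)
        rw [hcol] at hs
        have k1 := Finset.card_insert_le (pf (pf i)) ({i, pf i} : Finset (Fin n))
        have k2 := hcard_ij i (pf i)
        omega
    have himg : S.image pf ⊆ Sᶜ := by
      intro q hq
      obtain ⟨i, hi, rfl⟩ := Finset.mem_image.mp hq
      simpa using hpS i hi
    have himgcard : (S.image pf).card = S.card :=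
      Finset.card_image_of_injOn (fun a ha b hb h =>
        hpinj a (by simpa using ha) b (by simpa using hb) h)
    have hle2 := Finset.card_le_card himg
    have hcc := Finset.card_add_card_compl S
    rw [Fintype.card_fin] at hcc
    rw [hAS]
    omega
  -- forcing
  have hsum2 : ∑ y ∈ D2, 2 * (A y).card = n * D2.card := by
    have e1 : ∑ y ∈ D2, 2 * (A y).card = 2 * (D1.card * (n - 1)) := by
      rw [← Finset.mul_sum, ← hsym,
        Finset.sum_congr rfl (fun x hx => part1B x hx), Finset.sum_const, smul_eq_mul]
    rw [e1]
    obtain ⟨m, rfl⟩ : ∃ m, n = m + 1 := ⟨n - 1, by omega⟩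
    have hc' : C.card * (3 * m + 1) = (m + 1) * 2 ^ m := by
      have h := hcard
      rw [show 3 * (m + 1) - 2 = 3 * m + 1 by omega] at h
      exact h
    have hcm : D1.card + D2.card = 2 * 2 ^ m := by
      rw [hD2def, Finset.card_add_card_compl, card_BW, pow_succ, mul_comm]
    rw [show m + 1 - 1 = m from rfl]
    zify at hc' hcm hD1card ⊢
    linear_combination (2:ℤ) * hc' - ((m:ℤ) + 1) * hcm + (3 * (m:ℤ) + 1) * hD1card
  have hforce : ∀ y ∈ D2, 2 * (A y).card = n := by
    by_contra hcon
    push_neg at hcon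
    obtain ⟨y₀, hy₀, hne⟩ := hcon
    have hlt : ∑ y ∈ D2, 2 * (A y).card < ∑ _y ∈ D2, n := by
      apply Finset.sum_lt_sum
      · intro y hy
        exact hub y (by simpa [hD2def] using hy)
      · exact ⟨y₀, hy₀, lt_of_le_of_ne (hub y₀ (by simpa [hD2def] using hy₀)) hne⟩
    rw [hsum2, Finset.sum_const, smul_eq_mul, mul_comm] at hlt
    omega
  -- conclusion
  refine ⟨?_, ?_⟩
  · intro x hx
    have hxD : x ∈ D1 := (memD1 x).mpr ((memC1 x).mp hx)
    exact ⟨by rw [hnc1 x]; exact part1 x hxD, by rw [hnc2 x]; exact part1B x hxD⟩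
  · intro y hy
    have hyD : y ∉ D1 := fun h => hy ((memC1 y).mpr ((memD1 y).mp h))
    have hyD2 : y ∈ D2 := by simp [hD2def, hyD]
    refine ⟨by rw [hnc1 y]; exact hforce y hyD2, ?_⟩
    rw [hnc2 y]
    have h1 := hforce y hyD2
    have h2 := hAB y
    omega
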